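/- If η is positive definite, dim V = n, and K = J ∘ J is a scalar multiple of the identity, K = t · id_V for some real t, then the Lie algebra g(η,θ) is isomorphic as a real Lie algebra to u(n/2) and its real dimension equals n²/4. -/

import Mathlib

open Matrix

attribute [local instance 100] LieRing.ofAssociativeRing

theorem finrank_u (m : ℕ) (u' : LieSubalgebra ℝ (Matrix (Fin m) (Fin m) ℂ))
    (hu' : ∀ A : Matrix (Fin m) (Fin m) ℂ, A ∈ u' ↔ Aᴴ = -A) :
    Module.finrank ℝ u' = m ^ 2 := by
  have hmem : ∀ A : Matrix (Fin m) (Fin m) ℂ, Aᴴ = -A → A ∈ u' := fun A h => (hu' A).2 h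
  have skew1 : ∀ A : Matrix (Fin m) (Fin m) ℂ,
      ((2⁻¹ : ℂ) • (A - Aᴴ))ᴴ = -((2⁻¹ : ℂ) • (A - Aᴴ)) := by
    intro A; ext i j
    simp [conjTranspose_apply]
    ring
  have skew2 : ∀ A : Matrix (Fin m) (Fin m) ℂ,
      ((Complex.I / 2) • (A + Aᴴ))ᴴ = -((Complex.I / 2) • (A + Aᴴ)) := by
    intro A; ext i j
    simp [conjTranspose_apply, Complex.ext_iff]
    constructor <;> ring
  have coe_smul : ∀ (r : ℝ) (x : ↥u'),
      ((r • x : ↥u') : Matrix (Fin m) (Fin m) ℂ) = r • (x : Matrix (Fin m) (Fin m) ℂ) :=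
    fun _ _ => rfl
  let e : Matrix (Fin m) (Fin m) ℂ ≃ₗ[ℝ] (↥u' × ↥u') :=
    { toFun := fun A => (⟨(2⁻¹ : ℂ) • (A - Aᴴ), hmem _ (skew1 A)⟩,
        ⟨(Complex.I / 2) • (A + Aᴴ), hmem _ (skew2 A)⟩)
      map_add' := by
        intro A B
        refine Prod.ext (Subtype.ext ?_) (Subtype.ext ?_) <;> ext i j <;>
          simp [conjTranspose_apply] <;> ring
      map_smul' := by
        intro r A
        refine Prod.ext (Subtype.ext ?_) (Subtype.ext ?_) <;> ext i j <;>
          simp [conjTranspose_apply, coe_smul, Complex.real_smul] <;> ring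
      invFun := fun P => (P.1 : Matrix (Fin m) (Fin m) ℂ) - Complex.I • (P.2 : Matrix (Fin m) (Fin m) ℂ)
      left_inv := by
        intro A
        ext i j
        simp [conjTranspose_apply, Complex.I_sq]
        ring_nf
        simp [Complex.I_sq]
        ring
      right_inv := by
        rintro ⟨⟨S, hS⟩, ⟨T, hT⟩⟩
        rw [hu'] at hS hT
        have hS' : ∀ i j, (starRingEnd ℂ) (S j i) = -(S i j) := by
          intro i j
          have := congrFun (congrFun hS i) j
          simpa [conjTranspose_apply] using this
        have hT' : ∀ i j, (starRingEnd ℂ) (T j i) = -(T i j) := by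
          intro i j
          have := congrFun (congrFun hT i) j
          simpa [conjTranspose_apply] using this
        refine Prod.ext (Subtype.ext ?_) (Subtype.ext ?_) <;> ext i j <;>
          simp [conjTranspose_apply, hS', hT'] <;> ring_nf <;> simp [Complex.I_sq] <;> ring_nf }
  have h1 : Module.finrank ℝ (Matrix (Fin m) (Fin m) ℂ) = 2 * m ^ 2 := by
    rw [Module.finrank_matrix ℝ ℂ, Complex.finrank_real_complex, Fintype.card_fin]
    ring
  have h2 := LinearEquiv.finrank_eq e
  rw [h1, Module.finrank_prod] at h2
  omega

set_option synthInstance.maxHeartbeats 1000000 in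
set_option maxHeartbeats 2000000 in
/-- If `η` is positive definite, `dim V = n`, and `K = J ∘ J` is a scalar
multiple of the identity, then the Lie algebra `g(η,θ)` is isomorphic as a real Lie
algebra to `u(n/2)` and its real dimension equals `n²/4`. -/
theorem stmt_10 {V : Type*} [AddCommGroup V] [Module ℝ V] [FiniteDimensional ℝ V]
    (n : ℕ) (hn : Module.finrank ℝ V = n)
    (η θ : V →ₗ[ℝ] V →ₗ[ℝ] ℝ)
    (hηsymm : ∀ a b, η a b = η b a)
    (hηpos : ∀ v : V, v ≠ 0 → 0 < η v v)
    (hθalt : ∀ a, θ a a = 0)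
    (hθnondeg : ∀ a, (∀ b, θ a b = 0) → a = 0)
    (J : Module.End ℝ V) (hJ : ∀ a b, θ a b = η (J a) b)
    (K : Module.End ℝ V) (hK : K = J * J)
    (t : ℝ) (hKscalar : K = t • (1 : Module.End ℝ V))
    (g : LieSubalgebra ℝ (Module.End ℝ V))
    (hg : ∀ l : Module.End ℝ V, l ∈ g ↔
      ((∀ a b, η (l a) b + η a (l b) = 0) ∧ (∀ a b, θ (l a) b + θ a (l b) = 0)))
    -- the compact unitary Lie algebras u(m) of skew-Hermitian complex m×m matrices
    (u : ∀ m : ℕ, LieSubalgebra ℝ (Matrix (Fin m) (Fin m) ℂ))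
    (hu : ∀ (m : ℕ) (A : Matrix (Fin m) (Fin m) ℂ), A ∈ u m ↔ Aᴴ = -A) :
    Nonempty (g ≃ₗ⁅ℝ⁆ u (n / 2)) ∧ 4 * Module.finrank ℝ g = n ^ 2 := by
  -- basic consequences
  have hθanti : ∀ a b, θ a b = -θ b a := by
    intro a b
    have h := hθalt (a + b)
    simp only [map_add, LinearMap.add_apply, hθalt] at h
    linarith [hθalt a, hθalt b]
  have hJJ : ∀ v, J (J v) = t • v := by
    intro v
    have h1 : (J * J) v = t • v := by
      rw [← hK, hKscalar]; simp
    simpa [Module.End.mul_apply] using h1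
  have hJskew : ∀ a b, η (J a) b = -η a (J b) := by
    intro a b
    have := hθanti a b
    rw [hJ a b, hJ b a] at this
    rw [this, hηsymm]
  have hηzero : ∀ v : V, (∀ b, η v b = 0) → v = 0 := by
    intro v hv
    by_contra h
    exact absurd (hv v) (ne_of_gt (hηpos v h))
  -- case split on triviality
  rcases Nat.eq_zero_or_pos n with hn0 | hnpos
  · -- trivial case
    subst hn0
    haveI : Subsingleton V := by
      rw [← Module.finrank_zero_iff (R := ℝ)]
      exact hn
    haveI : Subsingleton (Module.End ℝ V) := by infer_instance
    haveI : Subsingleton ↥g := by infer_instance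
    haveI : Subsingleton (Matrix (Fin 0) (Fin 0) ℂ) :=
      ⟨fun a b => Matrix.ext fun i _ => i.elim0⟩
    haveI : Subsingleton ↥(u (0 / 2)) := by
      constructor; intro a b; exact Subtype.ext (Subsingleton.elim _ _)
    constructor
    · exact ⟨⟨⟨⟨⟨fun _ => 0, fun _ _ => Subsingleton.elim _ _⟩,
        fun _ _ => Subsingleton.elim _ _⟩, fun {_ _} => Subsingleton.elim _ _⟩,
        fun _ => 0, fun _ => Subsingleton.elim _ _, fun _ => Subsingleton.elim _ _⟩⟩
    · rw [Module.finrank_zero_of_subsingleton]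
      rfl
  -- nontrivial case
  haveI : Nontrivial V := by
    apply Module.nontrivial_of_finrank_pos (R := ℝ)
    omega
  obtain ⟨v0, hv0⟩ := exists_ne (0 : V)
  have hJinj : ∀ v : V, J v = 0 → v = 0 := by
    intro v hv
    exact hθnondeg v (fun b => by rw [hJ, hv]; simp)
  have ht : t < 0 := by
    have hJv0 : J v0 ≠ 0 := fun h => hv0 (hJinj v0 h)
    have h1 : η (J (J v0)) v0 = t * η v0 v0 := by
      rw [hJJ]; simp
    have h2 : η (J (J v0)) v0 = -η (J v0) (J v0) := hJskew (J v0) v0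
    have h3 : 0 < η (J v0) (J v0) := hηpos _ hJv0
    have h4 : 0 < η v0 v0 := hηpos _ hv0
    nlinarith
  -- complex structure
  set c : ℝ := Real.sqrt (-t) with hcdef
  have hc : 0 < c := Real.sqrt_pos.mpr (by linarith)
  have hcc : c * c = -t := Real.mul_self_sqrt (by linarith)
  have hcne : c ≠ 0 := ne_of_gt hc
  set Iop : Module.End ℝ V := c⁻¹ • J with hIdef
  have hIop : ∀ v, Iop v = c⁻¹ • J v := fun v => rfl
  have hI2 : ∀ v, Iop (Iop v) = -v := by
    intro v
    rw [hIop, hIop, _root_.map_smul, hJJ, smul_smul, smul_smul]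
    have : c⁻¹ * c⁻¹ * t = -1 := by
      field_simp
      nlinarith
    rw [this, neg_one_smul]
  have hηIop : ∀ a b, η (Iop a) b = c⁻¹ * θ a b := by
    intro a b
    rw [hIop, _root_.map_smul]
    simp [hJ a b]
  have hθIop : ∀ a b, θ (Iop a) b = -(c * η a b) := by
    intro a b
    rw [hIop, _root_.map_smul]
    have : θ (J a) b = t * η a b := by
      rw [hJ (J a) b, hJJ]
      simp
    simp only [LinearMap.smul_apply, smul_eq_mul, this]
    have htc : t = -(c * c) := by linarith
    rw [htc]
    field_simp
  letI smulC : SMul ℂ V := ⟨fun z v => z.re • v + z.im • Iop v⟩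
  have hzsmul : ∀ (z : ℂ) (v : V), z • v = z.re • v + z.im • Iop v := fun _ _ => rfl
  letI modC : Module ℂ V := Module.ofMinimalAxioms
    (fun z x y => by
      simp only [hzsmul, map_add, smul_add]
      abel)
    (fun z w x => by
      simp only [hzsmul, Complex.add_re, Complex.add_im, add_smul]
      abel)
    (fun z w x => by
      simp only [hzsmul, map_add, _root_.map_smul, hI2, smul_add, smul_neg, smul_smul,
        Complex.mul_re, Complex.mul_im, sub_smul, add_smul]
      abel)
    (fun x => by simp [hzsmul])
  letI : IsScalarTower ℝ ℂ V := ⟨by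
    intro r z v
    simp only [hzsmul, Complex.smul_re, Complex.smul_im, smul_eq_mul, mul_smul, smul_add]⟩
  haveI : FiniteDimensional ℂ V := Module.Finite.of_restrictScalars_finite ℝ ℂ V
  have hcic : c⁻¹ * c = 1 := inv_mul_cancel₀ hcne
  letI core : InnerProductSpace.Core ℂ V :=
    { inner := fun x y => ⟨η x y, c⁻¹ * θ x y⟩
      conj_inner_symm := by
        intro x y
        apply Complex.ext
        · simp [Complex.conj_re, hηsymm x y]
        · simp only [Complex.conj_im]
          rw [hθanti x y]
          ring
      re_inner_nonneg := by
        intro x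
        rcases eq_or_ne x 0 with rfl | hx
        · simp
        · have := hηpos x hx
          simp only [RCLike.re_to_complex]
          exact le_of_lt this
      add_left := by
        intro x y z
        apply Complex.ext <;> simp [map_add] <;> ring
      smul_left := by
        intro x y r
        have hx : r • x = r.re • x + r.im • Iop x := rfl
        apply Complex.ext
        · simp only [hx, map_add, _root_.map_smul, LinearMap.add_apply, LinearMap.smul_apply,
            smul_eq_mul, hηIop, Complex.mul_re, Complex.conj_re, Complex.conj_im]
          ring
        · simp only [hx, map_add, _root_.map_smul, LinearMap.add_apply, LinearMap.smul_apply,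
            smul_eq_mul, hθIop, Complex.mul_im, Complex.conj_re, Complex.conj_im]
          field_simp
      definite := by
        intro x hx
        by_contra h
        have := hηpos x h
        have hre : η x x = 0 := by simpa using congrArg Complex.re hx
        exact absurd hre (ne_of_gt this) }
  letI : NormedAddCommGroup V := @InnerProductSpace.Core.toNormedAddCommGroup ℂ V _ _ _ core
  letI : InnerProductSpace ℂ V := InnerProductSpace.ofCore core.toCore
  have hinner : ∀ x y : V, (inner ℂ x y : ℂ) = ⟨η x y, c⁻¹ * θ x y⟩ := fun _ _ => rfl
  have hnm : n = 2 * Module.finrank ℂ V := by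
    have h2 := Module.finrank_mul_finrank ℝ ℂ V
    rw [Complex.finrank_real_complex, hn] at h2
    omega
  have hIopC : ∀ v : V, Complex.I • v = Iop v := by
    intro v
    rw [hzsmul]
    simp
  have hJC : ∀ v : V, J v = c • (Complex.I • v) := by
    intro v
    rw [hIopC, hIop, smul_smul, mul_inv_cancel₀ hcne, one_smul]
  have hcommJ : ∀ l : Module.End ℝ V, l ∈ g → ∀ v, l (J v) = J (l v) := by
    intro l hl v
    obtain ⟨h1, h2⟩ := (hg l).1 hl
    have key : ∀ b', η (l (J v) - J (l v)) b' = 0 := by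
      intro b'
      rw [map_sub, LinearMap.sub_apply]
      have e1 : η (l (J v)) b' = -η (J v) (l b') := by linarith [h1 (J v) b']
      have e2 : η (J (l v)) b' = -η (J v) (l b') := by
        rw [← hJ (l v) b']
        have := h2 v b'
        rw [hJ v (l b')] at this
        linarith
      rw [e1, e2]
      ring
    have := hηzero _ key
    have h0 : l (J v) - J (l v) = 0 := this
    rw [sub_eq_zero] at h0
    exact h0
  have hmemg : ∀ l : Module.End ℝ V, l ∈ g ↔
      ((∀ v, l (J v) = J (l v)) ∧ ∀ x y : V, (inner ℂ (l x) y : ℂ) + inner ℂ x (l y) = 0) := by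
    intro l
    constructor
    · intro hl
      refine ⟨hcommJ l hl, ?_⟩
      obtain ⟨h1, h2⟩ := (hg l).1 hl
      intro x y
      rw [hinner, hinner]
      apply Complex.ext
      · simpa using h1 x y
      · simp only [Complex.add_im, Complex.zero_im]
        have := h2 x y
        nlinarith [h2 x y]
    · rintro ⟨-, h⟩
      rw [hg]
      constructor
      · intro a b'
        have := congrArg Complex.re (h a b')
        simpa [hinner] using this
      · intro a b'
        have him := congrArg Complex.im (h a b')
        simp only [hinner, Complex.add_im, Complex.zero_im] at him
        have h2 : c⁻¹ * (θ (l a) b' + θ a (l b')) = 0 := by ring_nf; ring_nf at him; linarith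
        rcases mul_eq_zero.mp h2 with h3 | h3
        · exact absurd h3 (inv_ne_zero hcne)
        · exact h3
  -- complex-linear extension
  let extC : (l : Module.End ℝ V) → (∀ v, l (J v) = J (l v)) → (V →ₗ[ℂ] V) := fun l hl =>
    { toFun := l
      map_add' := fun x y => map_add l x y
      map_smul' := fun z v => by
        have hIl : l (Iop v) = Iop (l v) := by
          simp only [hIop, _root_.map_smul, hl v]
        simp only [hzsmul, map_add, _root_.map_smul, hIl, RingHom.id_apply] }
  have hextC : ∀ (l : Module.End ℝ V) (hl : ∀ v, l (J v) = J (l v)) (v : V),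
      extC l hl v = l v := fun _ _ _ => rfl
  set B := stdOrthonormalBasis ℂ V with hBdef
  set bb := B.toBasis with hbbdef
  set M := LinearMap.toMatrixAlgEquiv bb with hMdef
  have hMentry : ∀ (f : V →ₗ[ℂ] V) (k l' : Fin (Module.finrank ℂ V)),
      M f k l' = inner ℂ (B k) (f (B l')) := by
    intro f k l'
    rw [hMdef, LinearMap.toMatrixAlgEquiv_apply, hbbdef,
      OrthonormalBasis.coe_toBasis_repr_apply, OrthonormalBasis.repr_apply_apply,
      OrthonormalBasis.coe_toBasis]
  have hLin : ∀ (f : V →ₗ[ℂ] V) (x : V),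
      (∀ l', (inner ℂ (f x) (B l') : ℂ) + inner ℂ x (f (B l')) = 0) →
      ∀ y, (inner ℂ (f x) y : ℂ) + inner ℂ x (f y) = 0 := by
    intro f x hx y
    let L : V →ₗ[ℂ] ℂ :=
      { toFun := fun y => (inner ℂ (f x) y : ℂ) + inner ℂ x (f y)
        map_add' := by
          intro a b'
          simp only [map_add, inner_add_right]
          ring
        map_smul' := by
          intro z a
          simp only [_root_.map_smul, inner_smul_right, RingHom.id_apply, smul_eq_mul]
          ring }
    have hL : L = (0 : V →ₗ[ℂ] ℂ) := by
      apply bb.ext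
      intro l'
      simpa [L, hbbdef, OrthonormalBasis.coe_toBasis] using hx l'
    simpa [L] using LinearMap.congr_fun hL y
  have hskewM : ∀ f : V →ₗ[ℂ] V,
      (∀ x y : V, (inner ℂ (f x) y : ℂ) + inner ℂ x (f y) = 0) ↔ (M f)ᴴ = -(M f) := by
    intro f
    constructor
    · intro hsk
      ext k l'
      rw [conjTranspose_apply, Matrix.neg_apply, hMentry, hMentry,
        RCLike.star_def, inner_conj_symm]
      linear_combination hsk (B k) (B l')
    · intro hA
      have hb : ∀ k l', (inner ℂ (f (B k)) (B l') : ℂ) + inner ℂ (B k) (f (B l')) = 0 := by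
        intro k l'
        have h1 := congrFun (congrFun hA k) l'
        simp only [conjTranspose_apply, Matrix.neg_apply, hMentry] at h1
        rw [RCLike.star_def, inner_conj_symm] at h1
        linear_combination h1
      have step1 : ∀ k y, (inner ℂ (f (B k)) y : ℂ) + inner ℂ (B k) (f y) = 0 :=
        fun k => hLin f (B k) (fun l' => hb k l')
      have step2 : ∀ x l', (inner ℂ (f x) (B l') : ℂ) + inner ℂ x (f (B l')) = 0 := by
        intro x l'
        have h1 := congrArg (starRingEnd ℂ) (step1 l' x)
        simp only [map_add, inner_conj_symm, map_zero] at h1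
        linear_combination h1
      exact fun x => hLin f x (step2 x)
  letI : SMulCommClass ℝ ℂ V := ⟨by
    intro r z v
    simp only [hzsmul, smul_add, smul_smul, _root_.map_smul]
    rw [mul_comm r z.re, mul_comm r z.im]⟩
  have hrestr_mem : ∀ f : V →ₗ[ℂ] V, (M f)ᴴ = -(M f) →
      (f.restrictScalars ℝ : Module.End ℝ V) ∈ g := by
    intro f hA
    rw [hmemg]
    have hsk := (hskewM f).2 hA
    constructor
    · intro v
      show f (J v) = J (f v)
      rw [hJC v, hJC (f v), LinearMap.map_smul_of_tower, _root_.map_smul]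
    · intro x y
      exact hsk x y
  have hgmemM : ∀ (l : Module.End ℝ V) (hl : ∀ v, l (J v) = J (l v)),
      l ∈ g ↔ (M (extC l hl))ᴴ = -(M (extC l hl)) := by
    intro l hl
    rw [hmemg]
    constructor
    · rintro ⟨-, h⟩
      exact (hskewM _).1 (fun x y => h x y)
    · intro hA
      exact ⟨hl, fun x y => (hskewM _).2 hA x y⟩
  -- extension is compatible with algebraic operations
  have hext_add : ∀ (l1 l2 : Module.End ℝ V) h1 h2 h12,
      extC (l1 + l2) h12 = extC l1 h1 + extC l2 h2 := fun _ _ _ _ _ => LinearMap.ext fun _ => rfl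
  have hext_mul : ∀ (l1 l2 : Module.End ℝ V) h1 h2 h12,
      extC (l1 * l2) h12 = extC l1 h1 * extC l2 h2 := fun _ _ _ _ _ => LinearMap.ext fun _ => rfl
  have hext_sub : ∀ (l1 l2 : Module.End ℝ V) h1 h2 h12,
      extC (l1 - l2) h12 = extC l1 h1 - extC l2 h2 := fun _ _ _ _ _ => LinearMap.ext fun _ => rfl
  have hext_smul : ∀ (r : ℝ) (l : Module.End ℝ V) h1 h2,
      extC (r • l) h1 = (r : ℂ) • extC l h2 := by
    intro r l h1 h2
    apply LinearMap.ext
    intro v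
    show r • l v = (r : ℂ) • l v
    rw [show ((r : ℂ) • l v) = algebraMap ℝ ℂ r • l v from rfl, algebraMap_smul]
  have hcomm_of_mem : ∀ x : ↥g, ∀ v, (x : Module.End ℝ V) (J v) = J ((x : Module.End ℝ V) v) :=
    fun x => hcommJ x.1 x.2
  -- the Lie algebra equivalence
  have key : Nonempty (↥g ≃ₗ⁅ℝ⁆ ↥(u (Module.finrank ℂ V))) := by
    refine ⟨⟨⟨⟨⟨fun x => ⟨M (extC x.1 (hcomm_of_mem x)), (hu _ _).2 ((hgmemM x.1 (hcomm_of_mem x)).1 x.2)⟩,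
        ?_⟩, ?_⟩, ?_⟩,
        fun A => ⟨(M.symm A.1).restrictScalars ℝ, hrestr_mem (M.symm A.1)
          (by rw [AlgEquiv.apply_symm_apply]; exact (hu _ _).1 A.2)⟩, ?_, ?_⟩⟩
    · intro x y
      apply Subtype.ext
      show M (extC (x.1 + y.1) (hcomm_of_mem (x + y))) =
        M (extC x.1 (hcomm_of_mem x)) + M (extC y.1 (hcomm_of_mem y))
      rw [hext_add x.1 y.1 (hcomm_of_mem x) (hcomm_of_mem y) (hcomm_of_mem (x + y)), map_add]
    · intro r x
      apply Subtype.ext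
      show M (extC (r • x.1) (hcomm_of_mem (r • x))) = r • M (extC x.1 (hcomm_of_mem x))
      rw [hext_smul r x.1 (hcomm_of_mem (r • x)) (hcomm_of_mem x), _root_.map_smul]
      rw [show ((r : ℂ) • M (extC x.1 (hcomm_of_mem x))) =
        algebraMap ℝ ℂ r • M (extC x.1 (hcomm_of_mem x)) from rfl, algebraMap_smul]
    · intro x y
      apply Subtype.ext
      show M (extC (⁅x, y⁆ : ↥g).1 (hcomm_of_mem ⁅x, y⁆)) =
        ⁅M (extC x.1 (hcomm_of_mem x)), M (extC y.1 (hcomm_of_mem y))⁆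
      have hco : (⁅x, y⁆ : ↥g).1 = x.1 * y.1 - y.1 * x.1 := by
        rw [LieSubalgebra.coe_bracket, Ring.lie_def]
      have hrw : extC (⁅x, y⁆ : ↥g).1 (hcomm_of_mem ⁅x, y⁆) =
          extC x.1 (hcomm_of_mem x) * extC y.1 (hcomm_of_mem y) -
          extC y.1 (hcomm_of_mem y) * extC x.1 (hcomm_of_mem x) := by
        apply LinearMap.ext
        intro v
        show (⁅x, y⁆ : ↥g).1 v = _
        rw [hco]
        rfl
      rw [hrw, _root_.map_sub, _root_.map_mul, _root_.map_mul, Ring.lie_def]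
    · intro x
      apply Subtype.ext
      show (M.symm (M (extC x.1 (hcomm_of_mem x)))).restrictScalars ℝ = x.1
      rw [AlgEquiv.symm_apply_apply]
      rfl
    · intro A
      apply Subtype.ext
      show M (extC ((M.symm A.1).restrictScalars ℝ)
        (hcomm_of_mem ⟨(M.symm A.1).restrictScalars ℝ, hrestr_mem (M.symm A.1)
          (by rw [AlgEquiv.apply_symm_apply]; exact (hu _ _).1 A.2)⟩)) = A.1
      have : extC ((M.symm A.1).restrictScalars ℝ)
          (hcomm_of_mem ⟨(M.symm A.1).restrictScalars ℝ, hrestr_mem (M.symm A.1)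
            (by rw [AlgEquiv.apply_symm_apply]; exact (hu _ _).1 A.2)⟩) = M.symm A.1 :=
        LinearMap.ext fun _ => rfl
      rw [this, AlgEquiv.apply_symm_apply]
  obtain ⟨e⟩ := key
  have hdim : Module.finrank ℝ ↥g = Module.finrank ℝ ↥(u (Module.finrank ℂ V)) :=
    e.toLinearEquiv.finrank_eq
  have hdimu : Module.finrank ℝ ↥(u (Module.finrank ℂ V)) = (Module.finrank ℂ V) ^ 2 :=
    finrank_u _ _ (hu _)
  have hn2 : n / 2 = Module.finrank ℂ V := by omega
  constructor
  · rw [hn2]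
    exact ⟨e⟩
  · rw [hdim, hdimu, hnm]
    ring
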